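/- Deterministic ℓ2 estimation bound (core of Theorem 1): let β̂ be a global minimizer over ℝᵖ of Q(β) = L(β) + λ ‖β‖₁ with λ > 0. Assume: (i) β*_j = 0 for all j ∉ S where |S| = s ≥ 1; (ii) λ ≥ 2 ‖ξ‖_∞; (iii) restricted strong convexity: Δᵀ G Δ ≥ α ‖Δ‖₂² − κ ‖Δ‖₁² for all Δ with ‖Δ_{S^c}‖₁ ≤ 3‖Δ_S‖₁, where α > 0 and κ ≥ 0; and (iv) 16 κ s ≤ α/2. Then ‖β̂ − β*‖₂ ≤ 6 λ √s / α. -/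

import Mathlib

open Matrix

set_option maxHeartbeats 1000000 in

/-- Deterministic ℓ2 estimation bound (core of Theorem 1 of the paper).
Let `L(β) = (1/(2N)) (Y − Xβ)ᵀ W̃ (Y − Xβ)` with score
`ξ = −(1/N) Xᵀ W̃ (Y − Xβ*)` and Gram matrix `G = (1/N) Xᵀ W̃ X`, and let `β̂`
be a global minimizer of `Q(β) = L(β) + λ‖β‖₁`.  If `β*` is supported on `S`
with `|S| = s ≥ 1`, `λ ≥ 2‖ξ‖_∞`, restricted strong convexity
`Δᵀ G Δ ≥ α‖Δ‖₂² − κ‖Δ‖₁²` holds on the cone `‖Δ_{S^c}‖₁ ≤ 3‖Δ_S‖₁` with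
`α > 0`, `κ ≥ 0`, and `16κs ≤ α/2`, then `‖β̂ − β*‖₂ ≤ 6λ√s/α`.
(The sup norm `‖ξ‖` below is the norm of the Pi type `Fin p → ℝ`.) -/
theorem deterministic_l2_estimation_bound (N p s : ℕ) (hN : 0 < N) (hp : 0 < p)
    (X : Matrix (Fin N) (Fin p) ℝ)
    (Wt : Matrix (Fin N) (Fin N) ℝ) (hWt : Wt.PosSemidef)
    (Y : Fin N → ℝ) (βstar : Fin p → ℝ)
    (L : (Fin p → ℝ) → ℝ)
    (hL : ∀ β, L β = (1 / (2 * (N : ℝ))) *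
      ((Y - X *ᵥ β) ⬝ᵥ (Wt *ᵥ (Y - X *ᵥ β))))
    (ξ : Fin p → ℝ)
    (hξ : ξ = (-(1 / (N : ℝ))) • (Xᵀ *ᵥ (Wt *ᵥ (Y - X *ᵥ βstar))))
    (G : Matrix (Fin p) (Fin p) ℝ)
    (hG : G = (1 / (N : ℝ)) • (Xᵀ * Wt * X))
    (S : Finset (Fin p)) (hcard : S.card = s) (hs : 1 ≤ s)
    (hsupp : ∀ j ∉ S, βstar j = 0)
    (lam α κ : ℝ) (hlam : 0 < lam) (hα : 0 < α) (hκ : 0 ≤ κ)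
    (hlamξ : 2 * ‖ξ‖ ≤ lam)
    (hRSC : ∀ Δ : Fin p → ℝ, (∑ j ∈ Sᶜ, |Δ j|) ≤ 3 * (∑ j ∈ S, |Δ j|) →
      α * (∑ j, (Δ j) ^ 2) - κ * (∑ j, |Δ j|) ^ 2 ≤ Δ ⬝ᵥ (G *ᵥ Δ))
    (hκs : 16 * κ * s ≤ α / 2)
    (βhat : Fin p → ℝ)
    (hmin : ∀ β : Fin p → ℝ,
      L βhat + lam * (∑ j, |βhat j|) ≤ L β + lam * (∑ j, |β j|)) :
    Real.sqrt (∑ j, (βhat j - βstar j) ^ 2) ≤ 6 * lam * Real.sqrt s / α := by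
  classical
  have hNR : (0:ℝ) < N := by exact_mod_cast hN
  set Δ : Fin p → ℝ := fun j => βhat j - βstar j with hΔdef
  set v : Fin N → ℝ := X *ᵥ Δ with hv
  set r : Fin N → ℝ := Y - X *ᵥ βstar with hr
  have hWsym : Wtᵀ = Wt := by simpa using hWt.1.eq
  have hsymdot : ∀ a b : Fin N → ℝ, a ⬝ᵥ Wt *ᵥ b = b ⬝ᵥ Wt *ᵥ a := by
    intro a b
    rw [Matrix.dotProduct_mulVec, ← Matrix.mulVec_transpose, hWsym, dotProduct_comm]
  have hpull : ∀ (u : Fin N → ℝ) (w : Fin p → ℝ), (Xᵀ *ᵥ u) ⬝ᵥ w = u ⬝ᵥ (X *ᵥ w) := by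
    intro u w
    rw [Matrix.mulVec_transpose, ← Matrix.dotProduct_mulVec]
  -- quadratic form identity
  have hQid : Δ ⬝ᵥ G *ᵥ Δ = (1 / (N:ℝ)) * (v ⬝ᵥ Wt *ᵥ v) := by
    rw [hG, Matrix.smul_mulVec, dotProduct_smul, smul_eq_mul]
    congr 1
    rw [← Matrix.mulVec_mulVec, ← Matrix.mulVec_mulVec, dotProduct_comm,
      hpull, dotProduct_comm, ← hv]
  -- score identity
  have hξΔ : ξ ⬝ᵥ Δ = -(1 / (N:ℝ)) * (r ⬝ᵥ Wt *ᵥ v) := by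
    rw [hξ, smul_dotProduct, smul_eq_mul, hpull, ← hv, dotProduct_comm, hsymdot]
  -- expansion of the loss
  have hβsum : βstar + Δ = βhat := by
    funext j
    simp [hΔdef]
  have hXβ : X *ᵥ βhat = X *ᵥ βstar + v := by
    rw [hv, ← Matrix.mulVec_add, hβsum]
  have hres : Y - X *ᵥ βhat = r - v := by
    rw [hXβ, hr]
    abel
  have hexp : L βhat = L βstar + ξ ⬝ᵥ Δ + (1/2) * (Δ ⬝ᵥ G *ᵥ Δ) := by
    rw [hL βhat, hL βstar, hres, hξΔ, hQid, ← hr]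
    have hsym : v ⬝ᵥ Wt *ᵥ r = r ⬝ᵥ Wt *ᵥ v := hsymdot v r
    rw [Matrix.mulVec_sub, dotProduct_sub (r - v), sub_dotProduct r v,
      sub_dotProduct r v, hsym]
    field_simp
    ring
  -- notation for key scalars
  set a : ℝ := ∑ j ∈ S, |Δ j| with hadef
  set b : ℝ := ∑ j ∈ Sᶜ, |Δ j| with hbdef
  set T : ℝ := ∑ j, (Δ j)^2 with hTdef
  set Q : ℝ := Δ ⬝ᵥ G *ᵥ Δ with hQdef
  have ha0 : 0 ≤ a := Finset.sum_nonneg fun j _ => abs_nonneg _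
  have hb0 : 0 ≤ b := Finset.sum_nonneg fun j _ => abs_nonneg _
  have hT0 : 0 ≤ T := Finset.sum_nonneg fun j _ => sq_nonneg _
  have hab : (∑ j, |Δ j|) = a + b := (Finset.sum_add_sum_compl S _).symm
  -- ℓ1 norm decompositions
  have hhat : (∑ j, |βhat j|) = (∑ j ∈ S, |βhat j|) + b := by
    rw [← Finset.sum_add_sum_compl S fun j => |βhat j|]
    congr 1
    refine Finset.sum_congr rfl fun j hj => ?_
    rw [Finset.mem_compl] at hj
    simp [hΔdef, hsupp j hj]
  have hstar : (∑ j, |βstar j|) = ∑ j ∈ S, |βstar j| := by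
    rw [← Finset.sum_add_sum_compl S fun j => |βstar j|]
    have : (∑ j ∈ Sᶜ, |βstar j|) = 0 := by
      refine Finset.sum_eq_zero fun j hj => ?_
      rw [Finset.mem_compl] at hj
      simp [hsupp j hj]
    rw [this, add_zero]
  have htri : (∑ j ∈ S, |βstar j|) - (∑ j ∈ S, |βhat j|) ≤ a := by
    rw [← Finset.sum_sub_distrib]
    refine Finset.sum_le_sum fun j _ => ?_
    calc |βstar j| - |βhat j| ≤ |βstar j - βhat j| := abs_sub_abs_le_abs_sub _ _
      _ = |Δ j| := by rw [abs_sub_comm]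
  -- score bound
  have hscore : |ξ ⬝ᵥ Δ| ≤ (lam/2) * (a + b) := by
    rw [← hab]
    calc |ξ ⬝ᵥ Δ| ≤ ∑ j, |ξ j * Δ j| := Finset.abs_sum_le_sum_abs _ _
      _ ≤ ∑ j, (lam/2) * |Δ j| := by
          refine Finset.sum_le_sum fun j _ => ?_
          rw [abs_mul]
          refine mul_le_mul_of_nonneg_right ?_ (abs_nonneg _)
          calc |ξ j| ≤ ‖ξ‖ := norm_le_pi_norm ξ j
            _ ≤ lam/2 := by linarith
      _ = (lam/2) * ∑ j, |Δ j| := by rw [Finset.mul_sum]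
  -- basic inequality from minimality
  have hbasic : (1/2) * Q ≤ (3*lam/2) * a - (lam/2) * b := by
    have hm := hmin βstar
    rw [hexp, hhat, hstar, mul_add] at hm
    have h1 : -(ξ ⬝ᵥ Δ) ≤ (lam/2) * (a + b) := by
      have h2 := neg_abs_le (ξ ⬝ᵥ Δ)
      linarith
    have h3 : lam * (∑ j ∈ S, |βstar j|) - lam * (∑ j ∈ S, |βhat j|) ≤ lam * a := by
      have := mul_le_mul_of_nonneg_left htri hlam.le
      rw [mul_sub] at this
      exact this
    linarith
  -- nonnegativity of the quadratic form
  have hQ0 : 0 ≤ Q := by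
    rw [hQid]
    have h4 : 0 ≤ v ⬝ᵥ Wt *ᵥ v := by simpa using hWt.dotProduct_mulVec_nonneg v
    positivity
  -- cone condition
  have hcone : b ≤ 3 * a := by nlinarith
  -- Cauchy–Schwarz on S
  have ha2 : a^2 ≤ (s:ℝ) * T := by
    have h1 : a^2 ≤ (S.card : ℝ) * ∑ j ∈ S, |Δ j|^2 := by
      exact_mod_cast sq_sum_le_card_mul_sum_sq (s := S) (f := fun j => |Δ j|)
    have h2 : (∑ j ∈ S, |Δ j|^2) ≤ T := by
      calc (∑ j ∈ S, |Δ j|^2) = ∑ j ∈ S, (Δ j)^2 := by simp [sq_abs]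
        _ ≤ ∑ j, (Δ j)^2 :=
            Finset.sum_le_sum_of_subset_of_nonneg (Finset.subset_univ S)
              (fun j _ _ => sq_nonneg _)
    calc a^2 ≤ (S.card : ℝ) * ∑ j ∈ S, |Δ j|^2 := h1
      _ ≤ (s:ℝ) * T := by
          rw [hcard]
          exact mul_le_mul_of_nonneg_left h2 (by positivity)
  -- RSC lower bound
  have hrsc := hRSC Δ hcone
  rw [← hTdef, hab, ← hQdef] at hrsc
  have hab4 : (a+b)^2 ≤ 16 * ((s:ℝ) * T) := by
    nlinarith [mul_nonneg (by linarith : (0:ℝ) ≤ 3*a - b) (by linarith : (0:ℝ) ≤ 5*a + b)]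
  have hk1 : κ * (a+b)^2 ≤ κ * (16 * ((s:ℝ)*T)) := mul_le_mul_of_nonneg_left hab4 hκ
  have hk2 : (16 * κ * (s:ℝ)) * T ≤ (α/2) * T := mul_le_mul_of_nonneg_right hκs hT0
  have hQlow : (α/2) * T ≤ Q := by nlinarith
  have hmain : (α/4) * T ≤ (3*lam/2) * a := by
    nlinarith [mul_nonneg hlam.le hb0]
  -- Cauchy–Schwarz transfer to the ℓ2 norm
  set u : ℝ := Real.sqrt T with hudef
  have hu0 : 0 ≤ u := Real.sqrt_nonneg _
  have hTu : T = u^2 := (Real.sq_sqrt hT0).symm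
  have hsa : a ≤ Real.sqrt s * u := by
    calc a = Real.sqrt (a^2) := (Real.sqrt_sq ha0).symm
      _ ≤ Real.sqrt ((s:ℝ)*T) := Real.sqrt_le_sqrt ha2
      _ = Real.sqrt s * u := by rw [Real.sqrt_mul (by positivity)]
  have hss0 : (0:ℝ) ≤ Real.sqrt s := Real.sqrt_nonneg _
  show u ≤ 6 * lam * Real.sqrt s / α
  rw [le_div_iff₀ hα]
  rcases eq_or_lt_of_le hu0 with h0 | hu'
  · rw [← h0]
    have : (0:ℝ) ≤ 6 * lam * Real.sqrt s := by positivity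
    linarith
  · have key2 : (α/4) * u^2 ≤ (3*lam/2) * (Real.sqrt s * u) := by
      have := mul_le_mul_of_nonneg_left hsa (by positivity : (0:ℝ) ≤ 3*lam/2)
      rw [hTu] at hmain
      linarith
    have key3 : (α * u) * u ≤ (6 * lam * Real.sqrt s) * u := by nlinarith
    have := le_of_mul_le_mul_right key3 hu'
    linarith
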